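/- Let n be a positive integer with gcd(n, 10) = 1, and write n + 1 = d·2^s with d odd. Then n satisfies the strong Lucas condition with parameters (1,-1) (i.e., U_d(1,-1) ≡ 0 (mod n) or V_{d·2^r}(1,-1) ≡ 0 (mod n) for some 0 ≤ r < s) if and only if n satisfies the strong Lucas condition with parameters (5,5). -/

import Mathlib

def lucasU (P Q : ℤ) : ℕ → ℤ
  | 0 => 0
  | 1 => 1
  | k + 2 => P * lucasU P Q (k + 1) - Q * lucasU P Q k

def lucasV (P Q : ℤ) : ℕ → ℤ
  | 0 => 2
  | 1 => P
  | k + 2 => P * lucasV P Q (k + 1) - Q * lucasV P Q k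

lemma recU (P Q : ℤ) (k : ℕ) :
    lucasU P Q (k + 2) = P * lucasU P Q (k + 1) - Q * lucasU P Q k := by
  simp [lucasU]

lemma recV (P Q : ℤ) (k : ℕ) :
    lucasV P Q (k + 2) = P * lucasV P Q (k + 1) - Q * lucasV P Q k := by
  simp [lucasV]

lemma lucasV_eq (k : ℕ) :
    lucasV 1 (-1) k = 2 * lucasU 1 (-1) (k + 1) - lucasU 1 (-1) k := by
  induction k using Nat.twoStepInduction with
  | zero => simp [lucasU, lucasV]
  | one => simp [lucasU, lucasV]
  | more m ih1 ih2 =>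
    have e : m+2+1 = m+1+2 := by omega
    rw [recV 1 (-1) m, ih1, ih2, e, recU 1 (-1) (m+1), recU 1 (-1) m]
    ring

lemma key (m : ℕ) :
    lucasU 5 5 (2*m) = 5^m * lucasU 1 (-1) (2*m) ∧
    lucasU 5 5 (2*m+1) = 5^m * lucasV 1 (-1) (2*m+1) ∧
    lucasV 5 5 (2*m) = 5^m * lucasV 1 (-1) (2*m) ∧
    lucasV 5 5 (2*m+1) = 5^(m+1) * lucasU 1 (-1) (2*m+1) := by
  induction m with
  | zero => norm_num [lucasU, lucasV]
  | succ m ih =>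
    obtain ⟨h1, h2, h3, h4⟩ := ih
    have rF1 : lucasU 1 (-1) (2*m+2) = lucasU 1 (-1) (2*m+1) + lucasU 1 (-1) (2*m) := by
      have := recU 1 (-1) (2*m); linarith
    have rF2 : lucasU 1 (-1) (2*m+1+2) = lucasU 1 (-1) (2*m+2) + lucasU 1 (-1) (2*m+1) := by
      have := recU 1 (-1) (2*m+1)
      have e : 2*m+1+1 = 2*m+2 := by omega
      rw [e] at this; linarith
    have hV1 : lucasV 1 (-1) (2*m+1) = 2 * lucasU 1 (-1) (2*m+2) - lucasU 1 (-1) (2*m+1) := by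
      have := lucasV_eq (2*m+1)
      have e : 2*m+1+1 = 2*m+2 := by omega
      rwa [e] at this
    have hV2 : lucasV 1 (-1) (2*m+2) = 2 * lucasU 1 (-1) (2*m+1+2) - lucasU 1 (-1) (2*m+2) := by
      have := lucasV_eq (2*m+2)
      have e : 2*m+2+1 = 2*m+1+2 := by omega
      rwa [e] at this
    have hV3 : lucasV 1 (-1) (2*m+1+2) = 2 * (lucasU 1 (-1) (2*m+1+2) + lucasU 1 (-1) (2*m+2)) - lucasU 1 (-1) (2*m+1+2) := by
      have := lucasV_eq (2*m+1+2)
      have e : 2*m+1+2+1 = 2*m+2+2 := by omega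
      rw [e, recU 1 (-1) (2*m+2)] at this
      have e2 : 2*m+2+1 = 2*m+1+2 := by omega
      rw [e2] at this
      rw [this]; ring
    have hU2 : lucasU 5 5 (2*m+2) = 5^(m+1) * lucasU 1 (-1) (2*m+2) := by
      rw [recU 5 5 (2*m), h1, h2, hV1, rF1]; ring
    have hV0 : lucasV 1 (-1) (2*m) = 2 * lucasU 1 (-1) (2*m+1) - lucasU 1 (-1) (2*m) :=
      lucasV_eq (2*m)
    have hW2 : lucasV 5 5 (2*m+2) = 5^(m+1) * lucasV 1 (-1) (2*m+2) := by
      rw [recV 5 5 (2*m), h3, h4, hV2, hV0, rF2, rF1]; ring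
    have hU3 : lucasU 5 5 (2*m+1+2) = 5^(m+1) * lucasV 1 (-1) (2*m+1+2) := by
      rw [recU 5 5 (2*m+1)]
      have e : 2*m+1+1 = 2*m+2 := by omega
      rw [e, hU2, h2, hV3, hV1, rF2, rF1]; ring
    have hW3 : lucasV 5 5 (2*m+1+2) = 5^(m+1+1) * lucasU 1 (-1) (2*m+1+2) := by
      rw [recV 5 5 (2*m+1)]
      have e : 2*m+1+1 = 2*m+2 := by omega
      rw [e, hW2, h4, hV2, rF2, rF1]; ring
    have e1 : 2*(m+1) = 2*m+2 := by omega
    have e2 : 2*(m+1)+1 = 2*m+1+2 := by omega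
    rw [e2, e1]
    exact ⟨hU2, hU3, hW2, hW3⟩

theorem stmt_15 (n : ℕ) (hn : 0 < n) (h10 : Nat.gcd n 10 = 1)
    (d s : ℕ) (hd : Odd d) (hds : n + 1 = d * 2 ^ s) :
    ((n : ℤ) ∣ lucasU 1 (-1) d ∨ ∃ r < s, (n : ℤ) ∣ lucasV 1 (-1) (d * 2 ^ r)) ↔
    ((n : ℤ) ∣ lucasU 5 5 d ∨ ∃ r < s, (n : ℤ) ∣ lucasV 5 5 (d * 2 ^ r)) := by
  obtain ⟨k, hk⟩ := hd
  have h2 : Nat.Coprime n 2 := Nat.Coprime.coprime_dvd_right (by norm_num) h10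
  have h5 : Nat.Coprime n 5 := Nat.Coprime.coprime_dvd_right (by norm_num) h10
  have hn2 : ¬ (2 ∣ n) := (Nat.Prime.coprime_iff_not_dvd Nat.prime_two).mp h2.symm
  have hnodd : n % 2 = 1 := by omega
  have hs : 1 ≤ s := by
    by_contra h
    have hs0 : s = 0 := by omega
    rw [hs0, pow_zero, mul_one] at hds
    omega
  have hcoZ : IsCoprime (n : ℤ) 5 := by
    rw [Int.isCoprime_iff_gcd_eq_one]
    exact h5
  have hiff : ∀ (j : ℕ) (x : ℤ), ((n : ℤ) ∣ 5 ^ j * x ↔ (n : ℤ) ∣ x) := by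
    intro j x
    constructor
    · intro h; exact (hcoZ.pow_right).dvd_of_dvd_mul_left h
    · intro h; exact Dvd.dvd.mul_left h _
  constructor
  · rintro (h | ⟨r, hr, h⟩)
    · refine Or.inr ⟨0, by omega, ?_⟩
      rw [pow_zero, mul_one, hk, (key k).2.2.2]
      exact Dvd.dvd.mul_left (by rw [← hk]; exact h) _
    · match r with
      | 0 =>
        left
        rw [pow_zero, mul_one] at h
        rw [hk, (key k).2.1]
        exact Dvd.dvd.mul_left (by rw [← hk]; exact h) _
      | (r + 1) =>
        refine Or.inr ⟨r + 1, hr, ?_⟩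
        have e : d * 2 ^ (r + 1) = 2 * (d * 2 ^ r) := by ring
        rw [e, (key (d * 2 ^ r)).2.2.1]
        exact Dvd.dvd.mul_left (by rw [← e]; exact h) _
  · rintro (h | ⟨r, hr, h⟩)
    · refine Or.inr ⟨0, by omega, ?_⟩
      rw [hk, (key k).2.1] at h
      rw [pow_zero, mul_one, hk]
      exact (hiff k _).mp h
    · match r with
      | 0 =>
        left
        rw [pow_zero, mul_one, hk, (key k).2.2.2] at h
        rw [hk]
        exact (hiff (k + 1) _).mp h
      | (r + 1) =>
        refine Or.inr ⟨r + 1, hr, ?_⟩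
        have e : d * 2 ^ (r + 1) = 2 * (d * 2 ^ r) := by ring
        rw [e, (key (d * 2 ^ r)).2.2.1] at h
        rw [e]
        exact (hiff _ _).mp h
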